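/- arXiv:2411.17431 — 3 statements merged into one kernel-verified Lean document; each statement's English description precedes it below -/
import Mathlib

section
/- Let s > 0 be a real number, p a positive integer, and v a real number. Let ε be a random variable uniformly distributed on (-1/2, 1/2), and define the quantized output Q = s · round(clip(v/s + ε, 0, p)), where clip(z, 0, p) = min(max(z, 0), p) and round denotes rounding to the nearest integer (with ties rounded up). Then E[Q] = clip(v, 0, s·p). -/
open Set MeasureTheory

private lemma floorCast_mono : Monotone (fun t : ℝ => (⌊t⌋ : ℝ)) :=
  fun a b h => Int.cast_le.mpr (Int.floor_mono h)

private lemma integral_floor (a : ℝ) : (∫ t in a..(a + 1), (⌊t⌋ : ℝ)) = a := by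
  set m : ℝ := (⌊a⌋ : ℝ) + 1 with hm
  have h1 : a ≤ m := by have := Int.lt_floor_add_one a; linarith
  have h2 : m ≤ a + 1 := by have := Int.floor_le a; linarith
  have hi1 : IntervalIntegrable (fun t : ℝ => (⌊t⌋ : ℝ)) volume a m :=
    floorCast_mono.intervalIntegrable
  have hi2 : IntervalIntegrable (fun t : ℝ => (⌊t⌋ : ℝ)) volume m (a + 1) :=
    floorCast_mono.intervalIntegrable
  have e1 : (∫ t in a..m, (⌊t⌋ : ℝ)) = (⌊a⌋ : ℝ) * (m - a) := by
    rw [intervalIntegral.integral_of_le h1, integral_Ioc_eq_integral_Ioo,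
      setIntegral_congr_fun (g := fun _ => ((⌊a⌋ : ℝ))) measurableSet_Ioo ?_]
    · rw [setIntegral_const, smul_eq_mul, measureReal_def, Real.volume_Ioo,
        ENNReal.toReal_ofReal (by linarith)]
      ring
    · intro t ht
      have hfl : ⌊t⌋ = ⌊a⌋ :=
        Int.floor_eq_iff.mpr ⟨le_trans (Int.floor_le a) ht.1.le, ht.2⟩
      simpa using congrArg (fun z : ℤ => (z : ℝ)) hfl
  have e2 : (∫ t in m..(a + 1), (⌊t⌋ : ℝ)) = ((⌊a⌋ : ℝ) + 1) * (a + 1 - m) := by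
    rw [intervalIntegral.integral_of_le h2, integral_Ioc_eq_integral_Ioo,
      setIntegral_congr_fun (g := fun _ => ((⌊a⌋ : ℝ) + 1)) measurableSet_Ioo ?_]
    · rw [setIntegral_const, smul_eq_mul, measureReal_def, Real.volume_Ioo,
        ENNReal.toReal_ofReal (by linarith)]
      ring
    · intro t ht
      have hfl : ⌊t⌋ = ⌊a⌋ + 1 := by
        apply Int.floor_eq_iff.mpr
        constructor
        · push_cast
          exact ht.1.le
        · push_cast
          have := Int.lt_floor_add_one a
          have h3 := ht.2
          linarith
      show ((⌊t⌋ : ℤ) : ℝ) = (⌊a⌋ : ℝ) + 1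
      rw [hfl]
      push_cast
      ring
  rw [← intervalIntegral.integral_add_adjacent_intervals hi1 hi2, e1, e2, hm]
  ring

private lemma integral_round (u : ℝ) :
    (∫ ε in Set.Ioo (-(1/2) : ℝ) (1/2), (round (u + ε) : ℝ)) = u := by
  rw [← integral_Ioc_eq_integral_Ioo,
    ← intervalIntegral.integral_of_le (by norm_num : (-(1/2) : ℝ) ≤ 1/2)]
  have : (∫ ε in (-(1/2) : ℝ)..(1/2), (round (u + ε) : ℝ))
      = ∫ ε in (-(1/2) : ℝ)..(1/2), (fun t => (⌊t⌋ : ℝ)) (ε + (u + 1/2)) := by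
    apply intervalIntegral.integral_congr
    intro ε _
    simp only [round_eq]
    norm_cast
    congr 1
    ring
  rw [this, intervalIntegral.integral_comp_add_right (fun t => (⌊t⌋ : ℝ)) (u + 1/2)]
  have ha : (-(1/2) : ℝ) + (u + 1/2) = u := by ring
  have hb : (1/2 : ℝ) + (u + 1/2) = u + 1 := by ring
  rw [ha, hb, integral_floor]

/-- Noise Adaptor main theorem: the expected value of the stochastic quantizer
`Q = s * round(clip(v/s + ε, 0, p))` with `ε ~ U(-1/2, 1/2)` equals `clip(v, 0, s·p)`. -/
theorem noise_adaptor_expected_mean (s : ℝ) (hs : 0 < s) (p : ℕ) (hp : 0 < p) (v : ℝ) :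
    (∫ ε in Set.Ioo (-(1/2) : ℝ) (1/2),
      s * (round (min (max (v / s + ε) 0) (p : ℝ)) : ℝ)) =
    min (max v 0) (s * p) := by
  have hp1 : (1 : ℝ) ≤ (p : ℝ) := by exact_mod_cast hp
  rcases le_or_gt v 0 with hv0 | hv0
  · -- v ≤ 0 : everything is 0
    have hu : v / s ≤ 0 := div_nonpos_iff.mpr (Or.inr ⟨hv0, hs.le⟩)
    rw [setIntegral_congr_fun (g := fun _ => (0 : ℝ)) measurableSet_Ioo ?_]
    · rw [max_eq_right hv0, min_eq_left (by positivity)]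
      simp
    · intro ε hε
      simp only
      have hx : v / s + ε < 1/2 := by have := hε.2; linarith
      have hle : max (v / s + ε) 0 ≤ (p : ℝ) := by
        rcases max_cases (v / s + ε) 0 with ⟨h, _⟩ | ⟨h, _⟩ <;> rw [h] <;> linarith
      have hmax0 : (0:ℝ) ≤ max (v / s + ε) 0 := le_max_right _ _
      have hmaxlt : max (v / s + ε) 0 < 1/2 := by
        rcases max_cases (v / s + ε) 0 with ⟨h, _⟩ | ⟨h, _⟩ <;> rw [h] <;> linarith
      have : round (min (max (v / s + ε) 0) (p : ℝ)) = 0 := by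
        rw [min_eq_left hle, round_eq]
        apply Int.floor_eq_iff.mpr
        push_cast
        constructor <;> linarith
      rw [this]
      simp
  rcases le_or_gt (s * p) v with hvp | hvp
  · -- v ≥ s p : everything is s * p
    have hu : (p : ℝ) ≤ v / s := by
      rw [le_div_iff₀ hs]; linarith [hvp]
    rw [setIntegral_congr_fun (g := fun _ => s * (p : ℝ)) measurableSet_Ioo ?_]
    · rw [setIntegral_const, measureReal_def, Real.volume_Ioo,
        show (1/2 : ℝ) - (-(1/2)) = 1 by ring]
      have hsp : (0:ℝ) < s * p := by positivity
      rw [min_eq_right (by rw [max_eq_left (by linarith)]; linarith)]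
      simp
    · intro ε hε
      simp only
      have hx : (p : ℝ) - 1/2 < v / s + ε := by have := hε.1; linarith
      have hmax : max (v / s + ε) 0 = v / s + ε := max_eq_left (by linarith)
      have h1 : (p : ℝ) - 1/2 < min (v / s + ε) (p : ℝ) := lt_min hx (by linarith)
      have h2 : min (v / s + ε) (p : ℝ) ≤ (p : ℝ) := min_le_right _ _
      have : round (min (max (v / s + ε) 0) (p : ℝ)) = (p : ℤ) := by
        rw [hmax, round_eq]
        apply Int.floor_eq_iff.mpr
        push_cast
        constructor <;> linarith
      rw [this]
      push_cast
      ring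
  · -- 0 < v < s p : equals round(v/s + ε)
    have hu0 : 0 ≤ v / s := by positivity
    have hup : v / s ≤ (p : ℝ) := by rw [div_le_iff₀ hs]; nlinarith
    have key : ∀ ε ∈ Set.Ioo (-(1/2) : ℝ) (1/2),
        s * (round (min (max (v / s + ε) 0) (p : ℝ)) : ℝ) = s * (round (v / s + ε) : ℝ) := by
      intro ε hε
      congr 2
      set x := v / s + ε with hxdef
      clear_value x
      have hx1 : -(1/2) < x := by have := hε.1; simp only [hxdef]; linarith
      have hx2 : x < (p : ℝ) + 1/2 := by have := hε.2; simp only [hxdef]; linarith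
      rcases le_or_gt x 0 with hx0 | hx0
      · rw [max_eq_right hx0, min_eq_left (by linarith)]
        have ha : round (0:ℝ) = 0 := by norm_num
        have hb : round x = 0 := by
          rw [round_eq]
          apply Int.floor_eq_iff.mpr
          push_cast
          constructor <;> linarith
        rw [ha, hb]
      · rw [max_eq_left hx0.le]
        rcases le_or_gt x (p : ℝ) with hxp | hxp
        · rw [min_eq_left hxp]
        · rw [min_eq_right hxp.le]
          have h1 : round ((p:ℝ)) = (p : ℤ) := by
            rw [round_eq]
            apply Int.floor_eq_iff.mpr
            push_cast
            constructor <;> linarith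
          have h2 : round x = (p : ℤ) := by
            rw [round_eq]
            apply Int.floor_eq_iff.mpr
            push_cast
            constructor <;> linarith
          rw [h1, h2]
    rw [setIntegral_congr_fun measurableSet_Ioo key]
    rw [integral_const_mul, integral_round, mul_div_cancel₀ v hs.ne',
      max_eq_left hv0.le, min_eq_left hvp.le]
end

section
/- Let u be a real number with 0 ≤ u < p (p a positive integer), and let ε be uniformly distributed on (-1/2, 1/2). Then E[round(clip(u + ε, 0, p))] = u, where round is rounding to the nearest integer with ties rounded up. -/
open Set MeasureTheory

lemma round_eq_of_lt_half (x : ℝ) (m : ℤ) (h1 : (m : ℝ) - 1/2 ≤ x)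
    (h2 : x < (m : ℝ) + 1/2) : round x = m := by
  rw [round_eq]
  apply Int.floor_eq_iff.2
  constructor <;> (push_cast; linarith)


/-- Case 1 of the Noise Adaptor theorem: for `0 ≤ u < p` the noisy rounding is unbiased. -/
theorem noise_adaptor_interior_unbiased (p : ℕ) (hp : 0 < p) (u : ℝ)
    (hu0 : 0 ≤ u) (hup : u < p) :
    (∫ ε in Set.Ioo (-(1/2) : ℝ) (1/2),
      (round (min (max (u + ε) 0) (p : ℝ)) : ℝ)) = u := by
  set n : ℤ := ⌊u⌋ with hn
  have hn0 : 0 ≤ n := Int.le_floor.2 (by exact_mod_cast hu0)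
  have hnp : n < (p : ℤ) := by
    have : u < ((p : ℤ) : ℝ) := by exact_mod_cast hup
    exact_mod_cast Int.floor_lt.2 this
  have hfl : (n : ℝ) ≤ u := Int.floor_le u
  have hfu : u < n + 1 := Int.lt_floor_add_one u
  have hnpR : (n : ℝ) + 1 ≤ p := by exact_mod_cast hnp
  set c : ℝ := 1/2 - (u - n) with hc
  have hc1 : -(1/2 : ℝ) < c := by rw [hc]; linarith
  have hc2 : c ≤ 1/2 := by rw [hc]; linarith
  have h1 : ∀ ε ∈ Ioo (-(1/2) : ℝ) c,
      (round (min (max (u + ε) 0) (p : ℝ)) : ℝ) = (n : ℝ) := by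
    rintro ε ⟨ha, hb⟩
    have hx1 : (n : ℝ) - 1/2 < u + ε := by linarith
    have hx2 : u + ε < (n : ℝ) + 1/2 := by rw [hc] at hb; linarith
    have hpR : (0 : ℝ) < p := by exact_mod_cast hp
    have hxp : max (u + ε) 0 ≤ p := by
      rcases le_total (u + ε) 0 with h | h
      · rw [max_eq_right h]; linarith
      · rw [max_eq_left h]; linarith
    rw [min_eq_left hxp]
    rcases le_total (u + ε) 0 with h | h
    · rw [max_eq_right h]
      have hn0' : n = 0 := by
        have : (n : ℝ) < 1/2 := by linarith
        have : n < 1 := by exact_mod_cast (by linarith : (n : ℝ) < 1)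
        omega
      rw [hn0']
      norm_num
    · rw [max_eq_left h]
      rw [round_eq_of_lt_half (u + ε) n (by linarith) hx2]
  have h2 : ∀ ε ∈ Ico c (1/2 : ℝ),
      (round (min (max (u + ε) 0) (p : ℝ)) : ℝ) = ((n : ℝ) + 1) := by
    rintro ε ⟨ha, hb⟩
    rw [hc] at ha
    have hx1 : (n : ℝ) + 1/2 ≤ u + ε := by linarith
    have hx2 : u + ε < (n : ℝ) + 3/2 := by linarith
    have hpos : (0 : ℝ) ≤ u + ε := by
      have : (0 : ℝ) ≤ (n : ℝ) := by exact_mod_cast hn0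
      linarith
    rw [max_eq_left hpos]
    rcases le_total (u + ε) (p : ℝ) with h | h
    · rw [min_eq_left h]
      rw [round_eq_of_lt_half (u + ε) (n + 1) (by push_cast; linarith)
        (by push_cast; linarith)]
      push_cast; ring
    · rw [min_eq_right h]
      have hpn : (p : ℤ) = n + 1 := by
        have : ((p : ℤ) : ℝ) < (n : ℝ) + 3/2 := by push_cast; linarith
        have : (p : ℤ) < n + 2 := by exact_mod_cast (by push_cast at this ⊢; linarith : ((p:ℤ):ℝ) < ((n + 2 : ℤ) : ℝ))
        omega
      have : round ((p : ℕ) : ℝ) = (p : ℤ) := by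
        rw [show ((p : ℕ) : ℝ) = (((p : ℤ)) : ℝ) by push_cast; ring]
        exact round_intCast _
      rw [this, hpn]
      push_cast; ring
  have hsplit : Ioo (-(1/2) : ℝ) (1/2) = Ioo (-(1/2)) c ∪ Ico c (1/2) :=
    (Set.Ioo_union_Ico_eq_Ioo hc1 hc2).symm
  have hdisj : Disjoint (Ioo (-(1/2) : ℝ) c) (Ico c (1/2)) :=
    by rw [Set.disjoint_left]; rintro x ⟨_, hx⟩ ⟨hx', _⟩; linarith
  have hi1 : IntegrableOn (fun ε : ℝ => (round (min (max (u + ε) 0) (p : ℝ)) : ℝ))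
      (Ioo (-(1/2) : ℝ) c) := by
    apply (integrableOn_congr_fun h1 measurableSet_Ioo).2
    exact integrableOn_const measure_Ioo_lt_top.ne
  have hi2 : IntegrableOn (fun ε : ℝ => (round (min (max (u + ε) 0) (p : ℝ)) : ℝ))
      (Ico c (1/2 : ℝ)) := by
    apply (integrableOn_congr_fun h2 measurableSet_Ico).2
    exact integrableOn_const measure_Ico_lt_top.ne
  rw [hsplit, setIntegral_union hdisj measurableSet_Ico hi1 hi2,
    setIntegral_congr_fun measurableSet_Ioo h1,
    setIntegral_congr_fun measurableSet_Ico h2,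
    setIntegral_const, setIntegral_const]
  rw [Real.volume_real_Ioo_of_le (by linarith), Real.volume_real_Ico_of_le (by linarith)]
  rw [hc]
  simp only [smul_eq_mul]
  ring
end

section
/- Consider an integrate-and-fire neuron with threshold th > 0, reset-by-subtraction, constant input current I per time step with 0 ≤ I ≤ th, and initial membrane potential u₀ = th/2. The neuron's membrane updates as u_t = u_{t-1} + I - z_t·th where z_t = 1 if u_{t-1} + I ≥ th and 0 otherwise. Then after T time steps the total spike count N_T = Σ z_t satisfies N_T = ⌊(T·I + th/2)/th⌋ whenever T·I + th/2 < (T+1)·th, and in particular |N_T/T - I/th| ≤ 1/(2T) + 1/T. -/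
/-- Firing-rate behaviour of the reset-by-subtraction integrate-and-fire neuron with
membrane pre-charged to `th/2` and constant sub-threshold input `I`: the spike count
over `T` steps is `⌊(T·I + th/2)/th⌋` (whenever `T·I + th/2 < (T+1)·th`), and the
firing rate converges to `I/th` with error at most `1/(2T) + 1/T`. -/
theorem if_neuron_spike_count (th I : ℝ) (hth : 0 < th) (hI0 : 0 ≤ I) (hI1 : I ≤ th)
    (u z : ℕ → ℝ)
    (hu0 : u 0 = th / 2)
    (hz : ∀ t : ℕ, z (t + 1) = if th ≤ u t + I then 1 else 0)
    (hu : ∀ t : ℕ, u (t + 1) = u t + I - z (t + 1) * th)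
    (T : ℕ) (hT : 0 < T) :
    ((T : ℝ) * I + th / 2 < ((T : ℝ) + 1) * th →
      (∑ t ∈ Finset.range T, z (t + 1)) = (⌊((T : ℝ) * I + th / 2) / th⌋ : ℝ)) ∧
    |(∑ t ∈ Finset.range T, z (t + 1)) / T - I / th| ≤ 1 / (2 * T) + 1 / T := by
  have hbd : ∀ t, 0 ≤ u t ∧ u t < th := by
    intro t
    induction t with
    | zero => rw [hu0]; constructor <;> linarith
    | succ m ih =>
      rw [hu m, hz m]
      split_ifs with h
      · constructor <;> nlinarith [ih.1, ih.2]
      · push_neg at h; constructor <;> nlinarith [ih.1, ih.2]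
  have htel : ∀ n : ℕ, u n = th / 2 + n * I - (∑ t ∈ Finset.range n, z (t + 1)) * th := by
    intro n
    induction n with
    | zero => simp [hu0]
    | succ m ih =>
      rw [Finset.sum_range_succ, hu m]
      push_cast
      nlinarith [ih]
  set N : ℝ := ∑ t ∈ Finset.range T, z (t + 1) with hN
  obtain ⟨n, hn⟩ : ∃ n : ℤ, N = n := by
    refine ⟨∑ t ∈ Finset.range T, if th ≤ u t + I then 1 else 0, ?_⟩
    push_cast
    refine Finset.sum_congr rfl fun t _ => ?_
    rw [hz t]
  have huT := htel T
  have h0 := (hbd T).1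
  have h1 := (hbd T).2
  have key : N * th = th / 2 + T * I - u T := by linarith
  have hTpos : (0 : ℝ) < T := by exact_mod_cast hT
  constructor
  · intro _
    rw [hn]
    congr 1
    symm
    rw [Int.floor_eq_iff]
    constructor
    · rw [le_div_iff₀ hth]; nlinarith
    · rw [div_lt_iff₀ hth]; push_cast; nlinarith
  · have heq : N / T - I / th = (th / 2 - u T) / (th * T) := by
      field_simp
      linear_combination 2 * key
    rw [heq, abs_div, abs_of_pos (by positivity : (0:ℝ) < th * T)]
    have habs : |th / 2 - u T| ≤ th / 2 := by
      rw [abs_le]; constructor <;> linarith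
    have h2T : (0:ℝ) < 1 / T := by positivity
    have step : |th / 2 - u T| / (th * T) ≤ (th / 2) / (th * T) := by gcongr
    have eq2 : (th / 2) / (th * T) = 1 / (2 * T) := by
      field_simp
    rw [eq2] at step
    linarith
end
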